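/- Let ℓ ≥ 1, let m be a positive even integer, let c₁,…,c_ℓ be real numbers, and let (z_{ij})_{1≤i,j≤ℓ} be real numbers with z_{ij} = z_{ji} for all i, j. Then (1/(m/2)!) · Σ_{v : {1,…,m} → {1,…,ℓ}} (Π_{i=1}^{m} c_{v(i)}) · Σ_{τ ∈ T_m} Π_{j=1}^{m/2} z_{v(Υ₁(j)) v(Υ₂(j))} = C_m · (Σ_{i=1}^{ℓ} Σ_{j=1}^{ℓ} c_i c_j z_{ij})^{m/2}, where the outer sum is over all functions v from {1,…,m} to {1,…,ℓ}, and for each τ the integers Υ₁(j), Υ₂(j) denote the two preimages of j under τ. -/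
import Mathlib


open Finset
open scoped Classical

noncomputable section

/-- `τ : {1,…,k} → {1,…,l}` is 2-to-1 if every fiber has exactly two elements. -/
def TwoToOne {k l : ℕ} (τ : Fin k → Fin l) : Prop :=
  ∀ j : Fin l, (Finset.univ.filter fun i => τ i = j).card = 2

/-- For a 2-to-1 map `τ` and symmetric `z`, this equals `∏_j z (Υ₁ j) (Υ₂ j)`, where
`Υ₁ j, Υ₂ j` are the two preimages of `j` under `τ`: each factor averages `z` over the
two ordered pairs of distinct elements of the fiber of `j`. -/
def fiberProd {k l : ℕ} (z : Fin k → Fin k → ℝ) (τ : Fin k → Fin l) : ℝ :=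
  ∏ j : Fin l, (∑ i ∈ Finset.univ.filter (fun i => τ i = j),
    ∑ i' ∈ Finset.univ.filter (fun i' => τ i' = j ∧ i' ≠ i), z i i') / 2

/-- `C_m = m! / (2^{m/2} (m/2)!)`, the `m`-th moment of the standard normal distribution
for even `m`. -/
def Cm (m : ℕ) : ℝ := (Nat.factorial m : ℝ) / (2 ^ (m / 2) * (Nat.factorial (m / 2) : ℝ))

namespace MagicAux

variable {n : ℕ}

def lo (j : Fin n) : Fin (n + n) := ⟨2 * j.1, by have := j.2; omega⟩
def hi (j : Fin n) : Fin (n + n) := ⟨2 * j.1 + 1, by have := j.2; omega⟩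

lemma lo_ne_hi (j : Fin n) : lo j ≠ hi j := by
  simp [lo, hi, Fin.ext_iff]

variable (τ : Fin (n + n) → Fin n)

def fib (j : Fin n) : Finset (Fin (n + n)) := Finset.univ.filter fun i => τ i = j

lemma fib_card (hτ : TwoToOne τ) (j : Fin n) : (fib τ j).card = 2 := hτ j

lemma fib_nonempty (hτ : TwoToOne τ) (j : Fin n) : (fib τ j).Nonempty :=
  Finset.card_pos.mp (by rw [fib_card τ hτ]; norm_num)

def A (hτ : TwoToOne τ) (j : Fin n) : Fin (n + n) := (fib τ j).min' (fib_nonempty τ hτ j)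
def B (hτ : TwoToOne τ) (j : Fin n) : Fin (n + n) := (fib τ j).max' (fib_nonempty τ hτ j)

lemma A_mem (hτ : TwoToOne τ) (j : Fin n) : A τ hτ j ∈ fib τ j := (fib τ j).min'_mem _
lemma B_mem (hτ : TwoToOne τ) (j : Fin n) : B τ hτ j ∈ fib τ j := (fib τ j).max'_mem _

lemma tau_A (hτ : TwoToOne τ) (j : Fin n) : τ (A τ hτ j) = j := by
  have := A_mem τ hτ j; simpa [fib] using this

lemma tau_B (hτ : TwoToOne τ) (j : Fin n) : τ (B τ hτ j) = j := by
  have := B_mem τ hτ j; simpa [fib] using this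

lemma A_ne_B (hτ : TwoToOne τ) (j : Fin n) : A τ hτ j ≠ B τ hτ j :=
  ne_of_lt (Finset.min'_lt_max'_of_card _ (by rw [fib_card τ hτ]; norm_num))

lemma fib_eq (hτ : TwoToOne τ) (j : Fin n) : fib τ j = {A τ hτ j, B τ hτ j} := by
  refine (Finset.eq_of_subset_of_card_le ?_ ?_).symm
  · intro x hx
    rcases Finset.mem_insert.mp hx with h | h
    · subst h; exact A_mem τ hτ j
    · rw [Finset.mem_singleton.mp h]; exact B_mem τ hτ j
  · rw [fib_card τ hτ, Finset.card_pair (A_ne_B τ hτ j)]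

lemma mem_cases (hτ : TwoToOne τ) (i : Fin (n + n)) : i = A τ hτ (τ i) ∨ i = B τ hτ (τ i) := by
  have hmem : i ∈ fib τ (τ i) := by simp [fib]
  rw [fib_eq τ hτ] at hmem
  simpa using hmem
def Φ {ℓ : ℕ} (hτ : TwoToOne τ) : (Fin n → Fin ℓ × Fin ℓ) ≃ (Fin (n + n) → Fin ℓ) where
  toFun w i := if i = A τ hτ (τ i) then (w (τ i)).1 else (w (τ i)).2
  invFun v j := (v (A τ hτ j), v (B τ hτ j))
  left_inv w := by
    funext j
    have hne : ¬ (B τ hτ j = A τ hτ j) := (A_ne_B τ hτ j).symm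
    simp [tau_A τ hτ j, tau_B τ hτ j, hne]
  right_inv v := by
    funext i
    show (if i = A τ hτ (τ i) then v (A τ hτ (τ i)) else v (B τ hτ (τ i))) = v i
    split_ifs with hcond
    · rw [← hcond]
    · rcases mem_cases τ hτ i with h | h
      · exact absurd h hcond
      · rw [← h]

lemma Φ_apply_A {ℓ : ℕ} (hτ : TwoToOne τ) (w : Fin n → Fin ℓ × Fin ℓ) (j : Fin n) :
    Φ τ hτ w (A τ hτ j) = (w j).1 := by
  show (if A τ hτ j = A τ hτ (τ (A τ hτ j)) then (w (τ (A τ hτ j))).1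
    else (w (τ (A τ hτ j))).2) = _
  rw [tau_A τ hτ j, if_pos rfl]

lemma Φ_apply_B {ℓ : ℕ} (hτ : TwoToOne τ) (w : Fin n → Fin ℓ × Fin ℓ) (j : Fin n) :
    Φ τ hτ w (B τ hτ j) = (w j).2 := by
  show (if B τ hτ j = A τ hτ (τ (B τ hτ j)) then (w (τ (B τ hτ j))).1
    else (w (τ (B τ hτ j))).2) = _
  rw [tau_B τ hτ j, if_neg (A_ne_B τ hτ j).symm]

lemma fiberProd_eq (hτ : TwoToOne τ) (z' : Fin (n + n) → Fin (n + n) → ℝ)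
    (hz' : ∀ i i', z' i i' = z' i' i) :
    fiberProd z' τ = ∏ j : Fin n, z' (A τ hτ j) (B τ hτ j) := by
  unfold fiberProd
  refine Finset.prod_congr rfl fun j _ => ?_
  have hAB := A_ne_B τ hτ j
  have hfe : (Finset.univ.filter fun i => τ i = j) = {A τ hτ j, B τ hτ j} := fib_eq τ hτ j
  have h1 : (Finset.univ.filter fun i' => τ i' = j ∧ i' ≠ A τ hτ j) = {B τ hτ j} := by
    ext i
    simp only [Finset.mem_filter, Finset.mem_univ, true_and, Finset.mem_singleton, ne_eq]
    constructor
    · rintro ⟨h1, h2⟩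
      rcases mem_cases τ hτ i with h | h
      · exact absurd (h1 ▸ h) h2
      · exact h1 ▸ h
    · rintro rfl; exact ⟨tau_B τ hτ j, (A_ne_B τ hτ j).symm⟩
  have h2 : (Finset.univ.filter fun i' => τ i' = j ∧ i' ≠ B τ hτ j) = {A τ hτ j} := by
    ext i
    simp only [Finset.mem_filter, Finset.mem_univ, true_and, Finset.mem_singleton, ne_eq]
    constructor
    · rintro ⟨h1, h2⟩
      rcases mem_cases τ hτ i with h | h
      · exact h1 ▸ h
      · exact absurd (h1 ▸ h) h2
    · rintro rfl; exact ⟨tau_A τ hτ j, A_ne_B τ hτ j⟩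
  rw [hfe, Finset.sum_pair hAB, h1, h2, Finset.sum_singleton, Finset.sum_singleton,
    hz' (B τ hτ j) (A τ hτ j)]
  ring

lemma sum_v {ℓ : ℕ} (hτ : TwoToOne τ) (c : Fin ℓ → ℝ) (z : Fin ℓ → Fin ℓ → ℝ)
    (hz : ∀ i j, z i j = z j i) :
    ∑ v : Fin (n + n) → Fin ℓ, (∏ i : Fin (n + n), c (v i)) *
      fiberProd (fun i i' => z (v i) (v i')) τ
    = (∑ i : Fin ℓ, ∑ j : Fin ℓ, c i * c j * z i j) ^ n := by
  have step1 : ∀ v : Fin (n + n) → Fin ℓ,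
      (∏ i : Fin (n + n), c (v i)) * fiberProd (fun i i' => z (v i) (v i')) τ
      = ∏ j : Fin n, (c (v (A τ hτ j)) * c (v (B τ hτ j)) *
          z (v (A τ hτ j)) (v (B τ hτ j))) := by
    intro v
    rw [fiberProd_eq τ hτ _ (fun i i' => hz (v i) (v i'))]
    have hprod : ∏ i : Fin (n + n), c (v i)
        = ∏ j : Fin n, (c (v (A τ hτ j)) * c (v (B τ hτ j))) := by
      rw [← Finset.prod_fiberwise Finset.univ τ (fun i => c (v i))]
      refine Finset.prod_congr rfl fun j _ => ?_
      rw [show (Finset.univ.filter fun i => τ i = j) = fib τ j from rfl, fib_eq τ hτ,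
        Finset.prod_pair (A_ne_B τ hτ j)]
    rw [hprod, ← Finset.prod_mul_distrib]
  calc ∑ v : Fin (n + n) → Fin ℓ, (∏ i : Fin (n + n), c (v i)) *
        fiberProd (fun i i' => z (v i) (v i')) τ
      = ∑ w : Fin n → Fin ℓ × Fin ℓ,
          ∏ j : Fin n, (c (w j).1 * c (w j).2 * z (w j).1 (w j).2) := by
        rw [← Equiv.sum_comp (Φ τ hτ) (fun v => (∏ i : Fin (n + n), c (v i)) *
          fiberProd (fun i i' => z (v i) (v i')) τ)]
        refine Finset.sum_congr rfl fun w _ => ?_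
        rw [step1]
        refine Finset.prod_congr rfl fun j _ => ?_
        rw [Φ_apply_A τ hτ, Φ_apply_B τ hτ]
    _ = ∏ _j : Fin n, ∑ p : Fin ℓ × Fin ℓ, (c p.1 * c p.2 * z p.1 p.2) := by
        rw [Finset.prod_univ_sum (fun _ : Fin n => (Finset.univ : Finset (Fin ℓ × Fin ℓ)))
          (fun _ p => c p.1 * c p.2 * z p.1 p.2), Fintype.piFinset_univ]
    _ = (∑ i : Fin ℓ, ∑ j : Fin ℓ, c i * c j * z i j) ^ n := by
        rw [Finset.prod_const, Finset.card_univ, Fintype.card_fin]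
        congr 1
        rw [Fintype.sum_prod_type]
/-! ### Counting 2-to-1 maps -/

def F (σ : Equiv.Perm (Fin (n + n))) : Fin (n + n) → Fin n :=
  fun i => ⟨(σ i).1 / 2, by have := (σ i).2; omega⟩

lemma twoToOne_F (σ : Equiv.Perm (Fin (n + n))) : TwoToOne (F σ) := by
  intro j
  have hfe : (Finset.univ.filter fun i => F σ i = j) = {σ.symm (lo j), σ.symm (hi j)} := by
    ext i
    simp only [Finset.mem_filter, Finset.mem_univ, true_and, Finset.mem_insert,
      Finset.mem_singleton]
    constructor
    · intro h
      have h1 : (σ i).1 / 2 = j.1 := congrArg Fin.val h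
      have h2 := (σ i).2
      have h3 : (σ i).1 = 2 * j.1 ∨ (σ i).1 = 2 * j.1 + 1 := by omega
      rcases h3 with h3 | h3
      · left
        have he : σ i = lo j := Fin.ext (by simpa [lo] using h3)
        rw [← he, Equiv.symm_apply_apply]
      · right
        have he : σ i = hi j := Fin.ext (by simpa [hi] using h3)
        rw [← he, Equiv.symm_apply_apply]
    · rintro (rfl | rfl) <;>
        · apply Fin.ext
          show (σ (σ.symm _)).1 / 2 = j.1
          rw [Equiv.apply_symm_apply]
          simp only [lo, hi]
          omega
  rw [hfe, Finset.card_pair (fun h => lo_ne_hi j (σ.symm.injective h))]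

lemma F_eq_iff (σ : Equiv.Perm (Fin (n + n))) (τ : Fin (n + n) → Fin n) :
    F σ = τ ↔ ∀ i, σ i = lo (τ i) ∨ σ i = hi (τ i) := by
  constructor
  · intro h i
    have h0 : F σ i = τ i := by rw [h]
    have h1 : (σ i).1 / 2 = (τ i).1 := congrArg Fin.val h0
    have h3 : (σ i).1 = 2 * (τ i).1 ∨ (σ i).1 = 2 * (τ i).1 + 1 := by omega
    rcases h3 with h3 | h3
    · exact Or.inl (Fin.ext (by simpa [lo] using h3))
    · exact Or.inr (Fin.ext (by simpa [hi] using h3))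
  · intro h
    funext i
    apply Fin.ext
    show (σ i).1 / 2 = (τ i).1
    rcases h i with h1 | h1 <;> rw [h1] <;> simp [lo, hi] <;> omega

def gfun (hτ : TwoToOne τ) (ε : Fin n → Bool) : Fin (n + n) → Fin (n + n) :=
  fun i => if (ε (τ i) = true) ↔ (i = A τ hτ (τ i)) then lo (τ i) else hi (τ i)

lemma gfun_A (hτ : TwoToOne τ) (ε : Fin n → Bool) (j : Fin n) :
    gfun τ hτ ε (A τ hτ j) = if ε j then lo j else hi j := by
  unfold gfun
  rw [tau_A τ hτ j]
  by_cases h : ε j = true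
  · rw [if_pos (iff_of_true h rfl), if_pos h]
  · rw [if_neg (fun hc => h (hc.mpr rfl)), if_neg h]

lemma gfun_B (hτ : TwoToOne τ) (ε : Fin n → Bool) (j : Fin n) :
    gfun τ hτ ε (B τ hτ j) = if ε j then hi j else lo j := by
  unfold gfun
  rw [tau_B τ hτ j]
  have hne : ¬ (B τ hτ j = A τ hτ j) := (A_ne_B τ hτ j).symm
  by_cases h : ε j = true
  · rw [if_neg (fun hc => hne (hc.mp h)), if_pos h]
  · rw [if_pos (iff_of_false h hne), if_neg h]

lemma gfun_div (hτ : TwoToOne τ) (ε : Fin n → Bool) (i : Fin (n + n)) :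
    (gfun τ hτ ε i).1 / 2 = (τ i).1 := by
  unfold gfun
  split <;> simp [lo, hi] <;> omega

lemma gfun_inj (hτ : TwoToOne τ) (ε : Fin n → Bool) :
    Function.Injective (gfun τ hτ ε) := by
  intro i i' h
  have htau : τ i = τ i' := by
    have h1 := gfun_div τ hτ ε i
    have h2 := gfun_div τ hτ ε i'
    rw [h] at h1
    exact Fin.ext (by omega)
  rcases mem_cases τ hτ i with hA1 | hB1 <;> rcases mem_cases τ hτ i' with hA2 | hB2
  · rw [hA1, hA2, htau]
  · exfalso
    rw [hA1, gfun_A] at h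
    rw [hB2, ← htau, gfun_B] at h
    by_cases hb : ε (τ i) = true
    · rw [if_pos hb, if_pos hb] at h; exact lo_ne_hi _ h
    · rw [if_neg hb, if_neg hb] at h; exact lo_ne_hi _ h.symm
  · exfalso
    rw [hB1, gfun_B] at h
    rw [hA2, ← htau, gfun_A] at h
    by_cases hb : ε (τ i) = true
    · rw [if_pos hb, if_pos hb] at h; exact lo_ne_hi _ h.symm
    · rw [if_neg hb, if_neg hb] at h; exact lo_ne_hi _ h
  · rw [hB1, hB2, htau]

def gperm (hτ : TwoToOne τ) (ε : Fin n → Bool) : Equiv.Perm (Fin (n + n)) :=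
  Equiv.ofBijective (gfun τ hτ ε) (Finite.injective_iff_bijective.mp (gfun_inj τ hτ ε))

lemma gperm_apply (hτ : TwoToOne τ) (ε : Fin n → Bool) (i : Fin (n + n)) :
    gperm τ hτ ε i = gfun τ hτ ε i := rfl

lemma F_gperm (hτ : TwoToOne τ) (ε : Fin n → Bool) : F (gperm τ hτ ε) = τ := by
  funext i
  apply Fin.ext
  show (gperm τ hτ ε i).1 / 2 = (τ i).1
  rw [gperm_apply]
  exact gfun_div τ hτ ε i

lemma card_fiber (hτ : TwoToOne τ) :
    ((Finset.univ : Finset (Equiv.Perm (Fin (n + n)))).filter fun σ => F σ = τ).card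
      = 2 ^ n := by
  have hcard : ((Finset.univ : Finset (Fin n → Bool))).card = 2 ^ n := by
    rw [Finset.card_univ, Fintype.card_fun, Fintype.card_bool, Fintype.card_fin]
  rw [← hcard]
  refine Finset.card_bij' (fun σ _ => fun j => decide (σ (A τ hτ j) = lo j))
    (fun ε _ => gperm τ hτ ε) (fun _ _ => Finset.mem_univ _)
    (fun ε _ => Finset.mem_filter.mpr ⟨Finset.mem_univ _, F_gperm τ hτ ε⟩) ?_ ?_
  · -- left inverse : gperm of extracted signs recovers σ
    intro σ hσ
    have hFσ : F σ = τ := (Finset.mem_filter.mp hσ).2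
    have hopt := (F_eq_iff σ τ).mp hFσ
    apply Equiv.ext
    intro i
    rw [gperm_apply]
    rcases mem_cases τ hτ i with hA1 | hB1
    · rw [hA1, gfun_A]
      by_cases hb : σ (A τ hτ (τ i)) = lo (τ i)
      · rw [if_pos (decide_eq_true hb), hb]
      · rw [if_neg (fun hc => hb (of_decide_eq_true hc))]
        have := hopt (A τ hτ (τ i))
        rw [tau_A τ hτ (τ i)] at this
        rcases this with h1 | h1
        · exact absurd h1 hb
        · exact h1.symm
    · rw [hB1, gfun_B]
      have hoptB := hopt (B τ hτ (τ i))
      rw [tau_B τ hτ (τ i)] at hoptB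
      have hne : σ (B τ hτ (τ i)) ≠ σ (A τ hτ (τ i)) :=
        fun hc => (A_ne_B τ hτ (τ i)) (σ.injective hc).symm
      by_cases hb : σ (A τ hτ (τ i)) = lo (τ i)
      · rw [if_pos (decide_eq_true hb)]
        rcases hoptB with h1 | h1
        · exact absurd (h1.trans hb.symm) hne
        · exact h1.symm
      · rw [if_neg (fun hc => hb (of_decide_eq_true hc))]
        have hAhi : σ (A τ hτ (τ i)) = hi (τ i) := by
          have := hopt (A τ hτ (τ i))
          rw [tau_A τ hτ (τ i)] at this
          rcases this with h1 | h1
          · exact absurd h1 hb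
          · exact h1
        rcases hoptB with h1 | h1
        · exact h1.symm
        · exact absurd (h1.trans hAhi.symm) hne
  · -- right inverse : extracting signs from gperm gives back ε
    intro ε _
    funext j
    show decide (gperm τ hτ ε (A τ hτ j) = lo j) = ε j
    have hg : gperm τ hτ ε (A τ hτ j) = if ε j then lo j else hi j := gfun_A τ hτ ε j
    rw [hg]
    by_cases hb : ε j = true
    · rw [if_pos hb, hb]
      exact decide_eq_true rfl
    · rw [if_neg hb]
      have hf : ε j = false := by simpa using hb
      rw [hf]
      exact decide_eq_false (Ne.symm (lo_ne_hi j))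

lemma card_T :
    (((Finset.univ : Finset (Fin (n + n) → Fin n)).filter fun τ => TwoToOne τ).card) * 2 ^ n
      = Nat.factorial (n + n) := by
  have h1 : (Finset.univ : Finset (Equiv.Perm (Fin (n + n)))).card = Nat.factorial (n + n) := by
    rw [Finset.card_univ, Fintype.card_perm, Fintype.card_fin]
  calc (((Finset.univ : Finset (Fin (n + n) → Fin n)).filter fun τ => TwoToOne τ).card) * 2 ^ n
      = ∑ τ ∈ (Finset.univ : Finset (Fin (n + n) → Fin n)).filter (fun τ => TwoToOne τ),
          2 ^ n := by rw [Finset.sum_const, smul_eq_mul]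
    _ = ∑ τ ∈ (Finset.univ : Finset (Fin (n + n) → Fin n)).filter (fun τ => TwoToOne τ),
          ((Finset.univ : Finset (Equiv.Perm (Fin (n + n)))).filter fun σ => F σ = τ).card :=
        Finset.sum_congr rfl fun τ hτ =>
          (card_fiber τ (Finset.mem_filter.mp hτ).2).symm
    _ = (Finset.univ : Finset (Equiv.Perm (Fin (n + n)))).card :=
        (Finset.card_eq_sum_card_fiberwise
          (fun σ _ => Finset.mem_filter.mpr ⟨Finset.mem_univ _, twoToOne_F σ⟩)).symm
    _ = Nat.factorial (n + n) := h1

end MagicAux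

/-- **Proposition 3.3** (combinatorial form): for even `m` and symmetric `(z_{ij})`,
`(1/(m/2)!) ∑_v (∏_i c_{v(i)}) ∑_{τ ∈ T_m} ∏_j z_{v(Υ₁(j)) v(Υ₂(j))}
  = C_m (∑_{i,j} c_i c_j z_{ij})^{m/2}`. -/
theorem magic_identity (ℓ : ℕ) (hℓ : 1 ≤ ℓ) (m : ℕ) (hm : 0 < m) (hme : Even m)
    (c : Fin ℓ → ℝ) (z : Fin ℓ → Fin ℓ → ℝ) (hz : ∀ i j, z i j = z j i) :
    (1 : ℝ) / (Nat.factorial (m / 2) : ℝ) *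
      ∑ v : Fin m → Fin ℓ, (∏ i : Fin m, c (v i)) *
        ∑ τ ∈ Finset.univ.filter (fun τ : Fin m → Fin (m / 2) => TwoToOne τ),
          fiberProd (fun i i' => z (v i) (v i')) τ
    = Cm m * (∑ i : Fin ℓ, ∑ j : Fin ℓ, c i * c j * z i j) ^ (m / 2) := by
  have hme' : m % 2 = 0 := Nat.even_iff.mp hme
  set n := m / 2 with hn
  clear_value n
  have hm2 : m = n + n := by omega
  subst hm2
  have h2 : (n + n) / 2 = n := by omega
  have hswap : ∑ v : Fin (n + n) → Fin ℓ, (∏ i : Fin (n + n), c (v i)) *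
      ∑ τ ∈ Finset.univ.filter (fun τ : Fin (n + n) → Fin n => TwoToOne τ),
        fiberProd (fun i i' => z (v i) (v i')) τ
      = ∑ τ ∈ Finset.univ.filter (fun τ : Fin (n + n) → Fin n => TwoToOne τ),
          ∑ v : Fin (n + n) → Fin ℓ, (∏ i : Fin (n + n), c (v i)) *
            fiberProd (fun i i' => z (v i) (v i')) τ := by
    rw [← Finset.sum_comm]
    exact Finset.sum_congr rfl fun v _ => Finset.mul_sum _ _ _
  rw [hswap]
  rw [Finset.sum_congr rfl (fun τ hτ =>
    MagicAux.sum_v τ (Finset.mem_filter.mp hτ).2 c z hz)]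
  rw [Finset.sum_const, nsmul_eq_mul]
  have hcardT := MagicAux.card_T (n := n)
  have hc : ((Finset.univ.filter fun τ : Fin (n + n) → Fin n => TwoToOne τ).card : ℝ) * 2 ^ n
      = (Nat.factorial (n + n) : ℝ) := by
    exact_mod_cast congrArg (Nat.cast : ℕ → ℝ) hcardT
  have h2n : (2 : ℝ) ^ n ≠ 0 := by positivity
  have hfac : (Nat.factorial n : ℝ) ≠ 0 := by
    exact_mod_cast Nat.factorial_ne_zero n
  have hcast : ((Finset.univ.filter fun τ : Fin (n + n) → Fin n => TwoToOne τ).card : ℝ)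
      = (Nat.factorial (n + n) : ℝ) / 2 ^ n := by
    rw [eq_div_iff h2n]; exact hc
  rw [hcast, Cm, h2]
  ring
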